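/- Let X be a real Banach space and let A ⊆ X be a nonempty bounded convex set. Then SCD(closure(A)) ∩ A = SCD(A); that is, a point a ∈ A is an SCD point of A if and only if it is an SCD point of the norm closure of A. -/

import Mathlib

open Set Metric Bornology Pointwise

variable {X : Type*} [NormedAddCommGroup X] [NormedSpace ℝ X]

/-- A slice of a bounded convex set `A`. -/
def IsSlice (A S : Set X) : Prop :=
  S.Nonempty ∧ ∃ (f : X →L[ℝ] ℝ) (α : ℝ), 0 < α ∧
    S = {x | x ∈ A ∧ sSup (f '' A) - α < f x}

/-- `V` is a determining sequence for the point `a` of `A`. -/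
def Determining (A : Set X) (V : ℕ → Set X) (a : X) : Prop :=
  ∀ B ⊆ A, (∀ n, (B ∩ V n).Nonempty) → a ∈ closure (convexHull ℝ B)

/-- `a` is a slicely countably determined point of `A`. -/
def SCDPoint (A : Set X) (a : X) : Prop :=
  a ∈ A ∧ ∃ V : ℕ → Set X, (∀ n, IsSlice A (V n)) ∧ Determining A V a

lemma bddAbove_image_ctslin (f : X →L[ℝ] ℝ) {A : Set X} (hAb : IsBounded A) :
    BddAbove (f '' A) :=
  (f.lipschitz.isBounded_image hAb).bddAbove

lemma sSup_image_closure (f : X →L[ℝ] ℝ) {A : Set X} (hA : A.Nonempty)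
    (hAb : IsBounded A) : sSup (f '' closure A) = sSup (f '' A) := by
  apply le_antisymm
  · apply csSup_le (hA.closure.image f)
    rintro y ⟨x, hx, rfl⟩
    have hx' : f x ∈ closure (f '' A) :=
      image_closure_subset_closure_image f.continuous ⟨x, hx, rfl⟩
    have hsub : closure (f '' A) ⊆ Iic (sSup (f '' A)) :=
      closure_minimal (fun y hy => le_csSup (bddAbove_image_ctslin f hAb) hy) isClosed_Iic
    exact hsub hx'
  · exact csSup_le_csSup (bddAbove_image_ctslin f hAb.closure) (hA.image f)
      (image_mono (f := f) subset_closure)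

theorem stmt2 {X : Type*} [NormedAddCommGroup X] [NormedSpace ℝ X] [CompleteSpace X]
    (A : Set X) (hA : A.Nonempty) (hAb : Bornology.IsBounded A) (hAc : Convex ℝ A) :
    {a | SCDPoint (closure A) a} ∩ A = {a | SCDPoint A a} := by
  ext a
  simp only [mem_inter_iff, mem_setOf_eq]
  constructor
  · rintro ⟨⟨-, V, hV, hdet⟩, haA⟩
    choose f α hα hVeq using fun n => (hV n).2
    refine ⟨haA, fun n => {x | x ∈ A ∧ sSup (f n '' A) - α n < f n x}, fun n => ?_, ?_⟩
    · constructor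
      · obtain ⟨y, ⟨x, hx, rfl⟩, hy⟩ := exists_lt_of_lt_csSup (hA.image (f n))
          (sub_lt_self _ (hα n))
        exact ⟨x, hx, hy⟩
      · exact ⟨f n, α n, hα n, rfl⟩
    · intro B hB hhit
      apply hdet B (hB.trans subset_closure)
      intro n
      obtain ⟨x, hxB, hxA, hxf⟩ := hhit n
      rw [hVeq n]
      exact ⟨x, hxB, subset_closure (hB hxB),
        by rwa [sSup_image_closure (f n) hA hAb]⟩
  · rintro ⟨haA, V, hV, hdet⟩
    choose f α hα hVeq using fun n => (hV n).2
    refine ⟨⟨subset_closure haA,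
      fun n => {x | x ∈ closure A ∧ sSup (f n '' closure A) - α n / 2 < f n x},
      fun n => ?_, ?_⟩, haA⟩
    · constructor
      · obtain ⟨y, ⟨x, hx, rfl⟩, hy⟩ := exists_lt_of_lt_csSup (hA.closure.image (f n))
          (sub_lt_self _ (half_pos (hα n)))
        exact ⟨x, hx, hy⟩
      · exact ⟨f n, α n / 2, half_pos (hα n), rfl⟩
    · intro B hB hhit
      choose b hbB hbA hbf using hhit
      -- approximate b n inside A within slice V n
      have key : ∀ (n : ℕ) (δ : ℝ), 0 < δ → ∃ x, x ∈ V n ∧ dist x (b n) < δ := by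
        intro n δ hδ
        have hopen : IsOpen ({x | sSup (f n '' A) - α n < f n x} ∩ ball (b n) δ) :=
          (isOpen_lt continuous_const (f n).continuous).inter isOpen_ball
        have hmem : b n ∈ {x | sSup (f n '' A) - α n < f n x} ∩ ball (b n) δ := by
          refine ⟨?_, mem_ball_self hδ⟩
          have := hbf n
          rw [sSup_image_closure (f n) hA hAb] at this
          have h2 : sSup (f n '' A) - α n < sSup (f n '' A) - α n / 2 := by linarith [hα n]
          exact lt_trans h2 this
        obtain ⟨x, ⟨hxf, hxb⟩, hxA⟩ :=
          _root_.mem_closure_iff.mp (hbA n) _ hopen hmem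
        exact ⟨x, by rw [hVeq n]; exact ⟨hxA, hxf⟩, mem_ball.mp hxb⟩
      rw [Metric.mem_closure_iff]
      intro ε hε
      choose g hgV hgdist using fun n => key n (ε / 2) (half_pos hε)
      have haC : a ∈ closure (convexHull ℝ (Set.range g)) := by
        apply hdet
        · rintro x ⟨n, rfl⟩
          have := hgV n; rw [hVeq n] at this; exact this.1
        · exact fun n => ⟨g n, ⟨n, rfl⟩, hgV n⟩
      -- range g ⊆ B + closedBall 0 (ε/2)
      have hsub : Set.range g ⊆ B + closedBall (0 : X) (ε / 2) := by
        rintro x ⟨n, rfl⟩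
        refine ⟨b n, hbB n, g n - b n, ?_, by module⟩
        simpa [dist_eq_norm] using (hgdist n).le
      have hconv : convexHull ℝ (Set.range g) ⊆ convexHull ℝ B + closedBall (0 : X) (ε / 2) := by
        calc convexHull ℝ (Set.range g) ⊆ convexHull ℝ (B + closedBall (0 : X) (ε / 2)) :=
              convexHull_mono hsub
          _ = convexHull ℝ B + convexHull ℝ (closedBall (0 : X) (ε / 2)) := convexHull_add _ _
          _ = convexHull ℝ B + closedBall (0 : X) (ε / 2) := by
              rw [(convex_closedBall (0 : X) (ε / 2)).convexHull_eq]
      obtain ⟨y, hy, hay⟩ := Metric.mem_closure_iff.mp haC (ε / 2) (half_pos hε)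
      obtain ⟨z, hz, w, hw, rfl⟩ := hconv hy
      refine ⟨z, hz, ?_⟩
      calc dist a z ≤ dist a (z + w) + dist (z + w) z := dist_triangle _ _ _
        _ < ε / 2 + ε / 2 := by
            have : dist (z + w) z = ‖w‖ := by simp [dist_eq_norm]
            rw [this]
            have hw' : ‖w‖ ≤ ε / 2 := by simpa using hw
            exact add_lt_add_of_lt_of_le hay hw'
        _ = ε := add_halves ε
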